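/- arXiv:2511.13592 — 3 statements merged into one kernel-verified Lean document; each statement's English description precedes it below -/
import Mathlib

section
/- Let (ν_t)_{t≥0} be a nonneg sequence that is nonincreasing, let σ_t = σ_0 β^t + b with σ_0 > 0, b > 0, β ∈ (0,1), let α_t = (t+1)^{-(1/2+γ)} with γ ∈ (0,1/2), and suppose Σ_{t=0}^{T-1} α_t σ_{t+1}² ν_t ≤ C for all T and some constant C > 0. Then for all T > 2^{2/(1-2γ)}, ν_T ≤ 2C(1/2-γ) / (b² T^{1/2-γ}). In particular ν_T → 0 as T → ∞. -/
open Filter Real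

private lemma step_le {y q : ℝ} (hy : 1 ≤ y) (hq0 : 0 ≤ q) (hq1 : q ≤ 1) :
    (y + 1) ^ q ≤ y ^ q + q * y ^ (q - 1) := by
  have hy0 : 0 < y := lt_of_lt_of_le one_pos hy
  have h1 : y + 1 = y * (1 + 1 / y) := by field_simp
  have h2 : (0:ℝ) ≤ 1 + 1 / y := by positivity
  have h3 : (y * (1 + 1/y)) ^ q = y ^ q * (1 + 1/y) ^ q :=
    Real.mul_rpow hy0.le h2
  have h4 : (1 + 1/y) ^ q ≤ 1 + q * (1/y) :=
    rpow_one_add_le_one_add_mul_self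
      (le_trans (by norm_num) (le_of_lt (by positivity : (0:ℝ) < 1/y))) hq0 hq1
  have h5 : y ^ (q - 1) = y ^ q / y := by
    rw [Real.rpow_sub hy0, Real.rpow_one]
  calc (y + 1) ^ q = y ^ q * (1 + 1/y) ^ q := by rw [h1, h3]
    _ ≤ y ^ q * (1 + q * (1/y)) := by
        exact mul_le_mul_of_nonneg_left h4 (Real.rpow_nonneg hy0.le q)
    _ = y ^ q + q * y ^ (q - 1) := by rw [h5]; ring

/-- Rate extraction: if `ν` is nonnegative and nonincreasing, `σ_t = σ₀β^t + b`,
`α_t = (t+1)^{-(1/2+γ)}`, and `Σ_{t<T} α_t σ_{t+1}² ν_t ≤ C` for all `T`, then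
`ν_T ≤ 2C(1/2-γ)/(b² T^{1/2-γ})` for all `T > 2^{2/(1-2γ)}`, and `ν_T → 0`. -/
theorem stmt15 (ν : ℕ → ℝ) (hν0 : ∀ t, 0 ≤ ν t) (hmono : ∀ s t, s ≤ t → ν t ≤ ν s)
    (σ0 b β : ℝ) (hσ0 : 0 < σ0) (hb : 0 < b) (hβ : β ∈ Set.Ioo (0 : ℝ) 1)
    (σ : ℕ → ℝ) (hσ : σ = fun t => σ0 * β ^ t + b)
    (γ : ℝ) (hγ : γ ∈ Set.Ioo (0 : ℝ) (1 / 2))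
    (α : ℕ → ℝ) (hα : α = fun t : ℕ => ((t : ℝ) + 1) ^ (-(1 / 2 + γ)))
    (C : ℝ) (hC : 0 < C)
    (hsum : ∀ T : ℕ, ∑ t ∈ Finset.range T, α t * (σ (t + 1)) ^ 2 * ν t ≤ C) :
    (∀ T : ℕ, (T : ℝ) > (2 : ℝ) ^ ((2 : ℝ) / (1 - 2 * γ)) →
        ν T ≤ 2 * C * (1 / 2 - γ) / (b ^ 2 * (T : ℝ) ^ ((1 : ℝ) / 2 - γ))) ∧
      Tendsto ν atTop (nhds 0) := by
  obtain ⟨hγ0, hγ2⟩ := hγ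
  set q : ℝ := 1 / 2 - γ with hqdef
  have hq0 : 0 < q := by simp only [hqdef]; linarith
  have hq1 : q < 1 := by simp only [hqdef]; linarith
  -- α in terms of q
  have hαq : ∀ t : ℕ, α t = ((t : ℝ) + 1) ^ (q - 1) := by
    intro t; rw [hα]; congr 1; simp only [hqdef]; ring
  have hαnn : ∀ t : ℕ, 0 ≤ α t := by
    intro t; rw [hαq]; positivity
  -- telescoping lower bound for the sum of α's
  have hτ : ∀ T : ℕ, ((T : ℝ) + 1) ^ q - 1 ≤ q * ∑ t ∈ Finset.range T, α t := by
    intro T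
    induction T with
    | zero => simp [Real.one_rpow]
    | succ T ih =>
        rw [Finset.sum_range_succ, mul_add]
        have hstep : ((T : ℝ) + 1 + 1) ^ q - ((T : ℝ) + 1) ^ q ≤ q * α T := by
          have := step_le (y := (T : ℝ) + 1) (q := q)
            (by have : (0:ℝ) ≤ (T:ℝ) := Nat.cast_nonneg T; linarith) hq0.le hq1.le
          rw [hαq]; linarith
        push_cast
        linarith
  -- comparison of the weighted sum
  have hcomp : ∀ T : ℕ, ν T * b ^ 2 * ∑ t ∈ Finset.range T, α t ≤ C := by
    intro T
    refine le_trans ?_ (hsum T)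
    rw [Finset.mul_sum]
    apply Finset.sum_le_sum
    intro t ht
    have ht' : t < T := Finset.mem_range.mp ht
    have hbσ : b ≤ σ (t + 1) := by
      rw [hσ]; simp only
      have : 0 < σ0 * β ^ (t + 1) := mul_pos hσ0 (pow_pos hβ.1 _)
      linarith
    have hσpos : 0 < σ (t + 1) := lt_of_lt_of_le hb hbσ
    have hb2 : b ^ 2 ≤ σ (t + 1) ^ 2 := by nlinarith
    have hν : ν T ≤ ν t := hmono t T ht'.le
    have h1 : b ^ 2 * ν T ≤ σ (t + 1) ^ 2 * ν t :=
      mul_le_mul hb2 hν (hν0 T) (sq_nonneg _)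
    have h2 := mul_le_mul_of_nonneg_left h1 (hαnn t)
    nlinarith
  -- main bound
  have hmain : ∀ T : ℕ, (T : ℝ) > (2 : ℝ) ^ ((2 : ℝ) / (1 - 2 * γ)) →
      ν T ≤ 2 * C * q / (b ^ 2 * (T : ℝ) ^ q) := by
    intro T hT
    have h2pos : (0:ℝ) < (2 : ℝ) ^ ((2 : ℝ) / (1 - 2 * γ)) := by positivity
    have hTpos : (0:ℝ) < (T : ℝ) := lt_trans h2pos hT
    have hTq2 : (2:ℝ) < (T : ℝ) ^ q := by
      have h := Real.rpow_lt_rpow h2pos.le hT hq0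
      have heq : ((2 : ℝ) ^ ((2 : ℝ) / (1 - 2 * γ))) ^ q = 2 := by
        rw [← Real.rpow_mul (by norm_num : (0:ℝ) ≤ 2),
          show (2 : ℝ) / (1 - 2 * γ) * q = 1 by
            have hne : (1:ℝ) - 2 * γ ≠ 0 := by linarith
            rw [hqdef]; field_simp, Real.rpow_one]
      rwa [heq] at h
    have hS1 : ((T : ℝ)) ^ q - 1 ≤ q * ∑ t ∈ Finset.range T, α t := by
      refine le_trans ?_ (hτ T)
      have : ((T : ℝ)) ^ q ≤ ((T : ℝ) + 1) ^ q :=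
        Real.rpow_le_rpow hTpos.le (by linarith) hq0.le
      linarith
    have hSnn : 0 ≤ ∑ t ∈ Finset.range T, α t :=
      Finset.sum_nonneg fun t _ => hαnn t
    have hTqpos : (0:ℝ) < (T : ℝ) ^ q := by positivity
    rw [le_div_iff₀ (by positivity)]
    have hcT := hcomp T
    have hνnn := hν0 T
    nlinarith [mul_le_mul_of_nonneg_left hS1 (mul_nonneg hνnn (sq_nonneg b)),
      mul_nonneg (mul_nonneg hνnn (sq_nonneg b)) (by linarith : (0:ℝ) ≤ (T:ℝ)^q - 2)]
  constructor
  · intro T hT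
    have := hmain T hT
    convert this using 3 <;> norm_num [hqdef]
  · -- tendsto
    have hbound : ∀ᶠ T : ℕ in atTop, ν T ≤ 2 * C * q / (b ^ 2 * (T : ℝ) ^ q) := by
      have : ∀ᶠ T : ℕ in atTop, (T : ℝ) > (2 : ℝ) ^ ((2 : ℝ) / (1 - 2 * γ)) :=
        tendsto_natCast_atTop_atTop.eventually_gt_atTop _
      filter_upwards [this] with T hT using hmain T hT
    have hg : Tendsto (fun T : ℕ => 2 * C * q / (b ^ 2 * (T : ℝ) ^ q)) atTop (nhds 0) := by
      apply Tendsto.div_atTop tendsto_const_nhds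
      apply Tendsto.const_mul_atTop (by positivity : (0:ℝ) < b ^ 2)
      exact (tendsto_rpow_atTop hq0).comp tendsto_natCast_atTop_atTop
    exact squeeze_zero' (Eventually.of_forall hν0) hbound hg
end

section
/- Let f : ℝ → ℝ be continuous with f(x) → -∞ as |x| → ∞ and with unique global maximizer x*. Fix σ > 0, δ > 0, and M > δ. Then there exists N₀ > 0 such that for all N > N₀ and all μ with |μ| ≤ M: if μ > x* + δ then F'_{N,σ}(μ) < 0, and if μ < x* - δ then F'_{N,σ}(μ) > 0, where F_{N,σ}(μ) = E_{x ~ N(μ, σ²)}[e^{N f(x)}]. -/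
open MeasureTheory Real Filter Set

private lemma abs_gauss_int {σ : ℝ} (hσ : 0 < σ) :
    Integrable fun t : ℝ => |t| * Real.exp (-t ^ 2 / (2 * σ ^ 2)) := by
  have hb : (0:ℝ) < (2 * σ ^ 2)⁻¹ := by positivity
  have h := (integrable_mul_exp_neg_mul_sq hb).abs
  have he : ∀ t : ℝ, |t * Real.exp (-(2 * σ ^ 2)⁻¹ * t ^ 2)|
      = |t| * Real.exp (-t ^ 2 / (2 * σ ^ 2)) := by
    intro t
    rw [abs_mul, abs_of_pos (Real.exp_pos _)]
    congr 1
    ring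
  simpa only [he] using h

private lemma gauss_int {σ : ℝ} (hσ : 0 < σ) :
    Integrable fun t : ℝ => Real.exp (-t ^ 2 / (2 * σ ^ 2)) := by
  have hb : (0:ℝ) < (2 * σ ^ 2)⁻¹ := by positivity
  have h := integrable_exp_neg_mul_sq hb
  have he : ∀ t : ℝ, Real.exp (-(2 * σ ^ 2)⁻¹ * t ^ 2)
      = Real.exp (-t ^ 2 / (2 * σ ^ 2)) := by
    intro t; congr 1; ring
  simpa only [he] using h

private lemma main_int {f : ℝ → ℝ} (hf : Continuous f) {σ : ℝ} (hσ : 0 < σ) (N B μ : ℝ)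
    (hub : ∀ x, N * f x ≤ B) :
    Integrable fun x : ℝ =>
      (x - μ) * (Real.exp (N * f x) * Real.exp (-(x - μ) ^ 2 / (2 * σ ^ 2))) := by
  have hdom : Integrable fun x : ℝ =>
      Real.exp B * (|x - μ| * Real.exp (-(x - μ) ^ 2 / (2 * σ ^ 2))) :=
    (((abs_gauss_int hσ).comp_sub_right μ)).const_mul _
  refine hdom.mono ?_ (Eventually.of_forall fun x => ?_)
  · exact (((continuous_id.sub continuous_const).mul
      (((hf.const_smul N).rexp).mul
        (Continuous.rexp (by continuity)))).aestronglyMeasurable)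
  · rw [Real.norm_eq_abs, Real.norm_eq_abs, abs_mul, abs_mul, abs_of_pos (Real.exp_pos _),
      abs_of_pos (Real.exp_pos _), abs_of_nonneg (by positivity :
        (0:ℝ) ≤ Real.exp B * (|x - μ| * Real.exp (-(x - μ) ^ 2 / (2 * σ ^ 2))))]
    have h1 : Real.exp (N * f x) ≤ Real.exp B := Real.exp_le_exp.2 (hub x)
    calc |x - μ| * (Real.exp (N * f x) * Real.exp (-(x - μ) ^ 2 / (2 * σ ^ 2)))
        ≤ |x - μ| * (Real.exp B * Real.exp (-(x - μ) ^ 2 / (2 * σ ^ 2))) := by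
          apply mul_le_mul_of_nonneg_left _ (abs_nonneg _)
          exact mul_le_mul_of_nonneg_right h1 (Real.exp_pos _).le
      _ = Real.exp B * (|x - μ| * Real.exp (-(x - μ) ^ 2 / (2 * σ ^ 2))) := by ring

/-- Core estimate: to the right of `xstar + δ` the signed integral is negative. -/
private lemma core_neg (f : ℝ → ℝ) (hf : Continuous f)
    (σ δ η N s ε c K xstar μ : ℝ)
    (hσ : 0 < σ) (hδ : 0 < δ) (hη : 0 < η) (hηδ : η ≤ δ / 2) (hN0 : 0 ≤ N)
    (hub : ∀ x, f x ≤ f xstar)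
    (hout : ∀ x, δ ≤ |x - xstar| → f x ≤ s)
    (hI : ∀ x, |x - xstar| ≤ η → f xstar - ε ≤ f x)
    (hcpos : 0 < c)
    (hcle : ∀ x ∈ Icc (xstar - η) (xstar + η), c ≤ Real.exp (-(x - μ) ^ 2 / (2 * σ ^ 2)))
    (hK : K = ∫ t : ℝ, |t| * Real.exp (-t ^ 2 / (2 * σ ^ 2)))
    (hμ : xstar + δ < μ)
    (hN : K * Real.exp (N * s) < δ / 2 * (2 * η) * c * Real.exp (N * (f xstar - ε))) :
    (∫ x : ℝ, (x - μ) * (Real.exp (N * f x) * Real.exp (-(x - μ) ^ 2 / (2 * σ ^ 2)))) < 0 := by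
  set g : ℝ → ℝ := fun x => (x - μ) * (Real.exp (N * f x) * Real.exp (-(x - μ) ^ 2 / (2 * σ ^ 2)))
    with hg
  have hub' : ∀ x, N * f x ≤ N * f xstar := fun x => mul_le_mul_of_nonneg_left (hub x) hN0
  have hgint : Integrable g := main_int hf hσ N (N * f xstar) μ hub'
  have hsplit : (∫ x, g x) = (∫ x in Ici μ, g x) + ∫ x in (Ici μ)ᶜ, g x :=
    (integral_add_compl measurableSet_Ici hgint).symm
  have hup : (∫ x in Ici μ, g x) ≤ K * Real.exp (N * s) := by
    have hmaj : Integrable fun x : ℝ =>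
        Real.exp (N * s) * (|x - μ| * Real.exp (-(x - μ) ^ 2 / (2 * σ ^ 2))) :=
      ((abs_gauss_int hσ).comp_sub_right μ).const_mul _
    have h1 : (∫ x in Ici μ, g x) ≤
        ∫ x in Ici μ, Real.exp (N * s) * (|x - μ| * Real.exp (-(x - μ) ^ 2 / (2 * σ ^ 2))) := by
      refine setIntegral_mono_on hgint.integrableOn hmaj.integrableOn measurableSet_Ici ?_
      intro x hx
      have hx' : μ ≤ x := hx
      have hfs : f x ≤ s := by
        apply hout
        rw [abs_of_nonneg (by linarith : (0:ℝ) ≤ x - xstar)]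
        linarith
      have : Real.exp (N * f x) ≤ Real.exp (N * s) :=
        Real.exp_le_exp.2 (mul_le_mul_of_nonneg_left hfs hN0)
      calc g x = (x - μ) * (Real.exp (N * f x) * Real.exp (-(x - μ) ^ 2 / (2 * σ ^ 2))) := rfl
        _ ≤ (x - μ) * (Real.exp (N * s) * Real.exp (-(x - μ) ^ 2 / (2 * σ ^ 2))) := by
            apply mul_le_mul_of_nonneg_left _ (by linarith : (0:ℝ) ≤ x - μ)
            exact mul_le_mul_of_nonneg_right this (Real.exp_pos _).le
        _ ≤ Real.exp (N * s) * (|x - μ| * Real.exp (-(x - μ) ^ 2 / (2 * σ ^ 2))) := by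
            rw [abs_of_nonneg (by linarith : (0:ℝ) ≤ x - μ)]; ring_nf; exact le_refl _
    have h2 : (∫ x in Ici μ, Real.exp (N * s) * (|x - μ| * Real.exp (-(x - μ) ^ 2 / (2 * σ ^ 2))))
        ≤ ∫ x : ℝ, Real.exp (N * s) * (|x - μ| * Real.exp (-(x - μ) ^ 2 / (2 * σ ^ 2))) := by
      refine setIntegral_le_integral hmaj (Eventually.of_forall fun x => ?_)
      positivity
    have h3 : (∫ x : ℝ, Real.exp (N * s) * (|x - μ| * Real.exp (-(x - μ) ^ 2 / (2 * σ ^ 2))))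
        = Real.exp (N * s) * K := by
      rw [integral_const_mul, hK]
      congr 1
      exact integral_sub_right_eq_self (fun t => |t| * Real.exp (-t ^ 2 / (2 * σ ^ 2))) μ
    linarith
  have hIccsub : Icc (xstar - η) (xstar + η) ⊆ (Ici μ)ᶜ := by
    intro x hx
    simp only [mem_compl_iff, mem_Ici, not_le]
    rcases hx with ⟨_, hx2⟩
    linarith
  have hgnonpos : ∀ x ∈ (Ici μ)ᶜ, g x ≤ 0 := by
    intro x hx
    simp only [mem_compl_iff, mem_Ici, not_le] at hx
    apply mul_nonpos_of_nonpos_of_nonneg (by linarith) (by positivity)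
  have hlow1 : (∫ x in (Ici μ)ᶜ, g x) ≤ ∫ x in Icc (xstar - η) (xstar + η), g x := by
    have := setIntegral_mono_set (hgint.neg.integrableOn (s := (Ici μ)ᶜ))
      (((ae_restrict_iff' measurableSet_Ici.compl).2 (Eventually.of_forall fun x hx => by
        simpa using neg_nonneg.2 (hgnonpos x hx))))
      (HasSubset.Subset.eventuallyLE hIccsub)
    simp only [Pi.neg_apply, integral_neg] at this
    linarith
  have hlow2 : (∫ x in Icc (xstar - η) (xstar + η), g x)
      ≤ -(δ / 2 * (2 * η) * c * Real.exp (N * (f xstar - ε))) := by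
    have hconst : (∫ _x in Icc (xstar - η) (xstar + η),
        (-(δ / 2) * (c * Real.exp (N * (f xstar - ε))) : ℝ))
        = -(δ / 2 * (2 * η) * c * Real.exp (N * (f xstar - ε))) := by
      rw [setIntegral_const, measureReal_def, Real.volume_Icc, smul_eq_mul]
      rw [show xstar + η - (xstar - η) = 2 * η by ring, ENNReal.toReal_ofReal (by linarith)]
      ring
    rw [← hconst]
    refine setIntegral_mono_on hgint.integrableOn (integrableOn_const ?_) measurableSet_Icc ?_
    · rw [Real.volume_Icc]; exact ENNReal.ofReal_ne_top
    · intro x hx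
      rcases hx with ⟨hx1, hx2⟩
      have habs : |x - xstar| ≤ η := abs_le.2 ⟨by linarith, by linarith⟩
      have hfx : f xstar - ε ≤ f x := hI x habs
      have hexp1 : Real.exp (N * (f xstar - ε)) ≤ Real.exp (N * f x) :=
        Real.exp_le_exp.2 (mul_le_mul_of_nonneg_left hfx hN0)
      have hexp2 : c ≤ Real.exp (-(x - μ) ^ 2 / (2 * σ ^ 2)) := hcle x ⟨hx1, hx2⟩
      have hwlow : c * Real.exp (N * (f xstar - ε)) ≤
          Real.exp (N * f x) * Real.exp (-(x - μ) ^ 2 / (2 * σ ^ 2)) := by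
        calc c * Real.exp (N * (f xstar - ε))
            ≤ Real.exp (-(x - μ) ^ 2 / (2 * σ ^ 2)) * Real.exp (N * f x) :=
              mul_le_mul hexp2 hexp1 (Real.exp_pos _).le (Real.exp_pos _).le
          _ = Real.exp (N * f x) * Real.exp (-(x - μ) ^ 2 / (2 * σ ^ 2)) := by ring
      have hxneg : x - μ ≤ -(δ / 2) := by linarith
      calc g x = (x - μ) * (Real.exp (N * f x) * Real.exp (-(x - μ) ^ 2 / (2 * σ ^ 2))) := rfl
        _ ≤ -(δ / 2) * (Real.exp (N * f x) * Real.exp (-(x - μ) ^ 2 / (2 * σ ^ 2))) :=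
            mul_le_mul_of_nonneg_right hxneg (by positivity)
        _ ≤ -(δ / 2) * (c * Real.exp (N * (f xstar - ε))) := by
            apply mul_le_mul_of_nonpos_left hwlow (by linarith)
  rw [hsplit]
  have : Real.exp (N * s) * K = K * Real.exp (N * s) := by ring
  linarith

/-- Differentiation under the integral sign for our family. -/
private lemma deriv_int (f : ℝ → ℝ) (hf : Continuous f) (σ N B μ : ℝ) (hσ : 0 < σ)
    (hub : ∀ x, N * f x ≤ B) :
    HasDerivAt (fun m : ℝ => ∫ x : ℝ, Real.exp (N * f x) * Real.exp (-(x - m) ^ 2 / (2 * σ ^ 2)))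
      ((σ ^ 2)⁻¹ * ∫ x : ℝ,
        (x - μ) * (Real.exp (N * f x) * Real.exp (-(x - μ) ^ 2 / (2 * σ ^ 2)))) μ := by
  set F' : ℝ → ℝ → ℝ := fun m x =>
    Real.exp (N * f x) * ((x - m) / σ ^ 2 * Real.exp (-(x - m) ^ 2 / (2 * σ ^ 2))) with hF'
  have hσ2 : (0:ℝ) < σ ^ 2 := by positivity
  have cont : ∀ m : ℝ, Continuous fun x =>
      Real.exp (N * f x) * Real.exp (-(x - m) ^ 2 / (2 * σ ^ 2)) := by
    intro m
    exact ((hf.const_smul N).rexp).mul (Continuous.rexp (by continuity))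
  have contF' : ∀ m : ℝ, Continuous (F' m) := by
    intro m
    apply ((hf.const_smul N).rexp).mul
    exact ((continuous_id.sub continuous_const).div_const _).mul (Continuous.rexp (by continuity))
  set bound : ℝ → ℝ := fun x => Real.exp B / σ ^ 2 * Real.exp ((2 * σ ^ 2)⁻¹) *
      ((|x - μ| + 1) * Real.exp (-(4 * σ ^ 2)⁻¹ * (x - μ) ^ 2)) with hbound
  have hbound_int : Integrable bound := by
    have h1 : Integrable fun t : ℝ => (|t| + 1) * Real.exp (-(4 * σ ^ 2)⁻¹ * t ^ 2) := by
      have ha : Integrable fun t : ℝ => |t| * Real.exp (-(4 * σ ^ 2)⁻¹ * t ^ 2) := by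
        have := abs_gauss_int (σ := Real.sqrt 2 * σ) (by positivity)
        refine this.congr (Eventually.of_forall fun t => ?_)
        congr 2
        rw [mul_pow, Real.sq_sqrt (by norm_num : (2:ℝ) ≥ 0)]
        ring
      have hb : Integrable fun t : ℝ => Real.exp (-(4 * σ ^ 2)⁻¹ * t ^ 2) :=
        integrable_exp_neg_mul_sq (by positivity)
      refine (ha.add hb).congr (Eventually.of_forall fun t => ?_)
      simp only [Pi.add_apply]
      ring
    exact ((h1.comp_sub_right μ).const_mul _)
  have key := hasDerivAt_integral_of_dominated_loc_of_deriv_le (F := fun m x =>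
      Real.exp (N * f x) * Real.exp (-(x - m) ^ 2 / (2 * σ ^ 2))) (F' := F') (x₀ := μ)
      (bound := bound) (Metric.ball_mem_nhds μ one_pos)
      (Eventually.of_forall fun m => (cont m).aestronglyMeasurable)
      ?_ ((contF' μ).aestronglyMeasurable) ?_ hbound_int ?_
  · obtain ⟨-, hd⟩ := key
    refine hd.congr_deriv (Eq.symm ?_)
    rw [← integral_const_mul]
    congr 1
    ext x
    rw [hF']
    field_simp
  · have hdom : Integrable fun x : ℝ => Real.exp B * Real.exp (-(x - μ) ^ 2 / (2 * σ ^ 2)) :=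
      ((gauss_int hσ).comp_sub_right μ).const_mul _
    refine hdom.mono (cont μ).aestronglyMeasurable (Eventually.of_forall fun x => ?_)
    simp only [Real.norm_eq_abs, abs_mul, Real.abs_exp]
    exact mul_le_mul_of_nonneg_right (Real.exp_le_exp.2 (hub x)) (Real.exp_pos _).le
  · refine Eventually.of_forall fun x => fun m hm => ?_
    have hmm : |m - μ| < 1 := by
      rw [Metric.mem_ball, Real.dist_eq] at hm; exact hm
    simp only [Real.norm_eq_abs, hF', abs_mul, Real.abs_exp, abs_div, abs_of_pos hσ2]
    have h1 : Real.exp (N * f x) ≤ Real.exp B := Real.exp_le_exp.2 (hub x)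
    have h2 : |x - m| ≤ |x - μ| + 1 := by
      have e : x - m = (x - μ) + (μ - m) := by ring
      rw [e]
      refine (abs_add_le _ _).trans ?_
      rw [abs_sub_comm μ m]
      linarith
    have h3 : Real.exp (-(x - m) ^ 2 / (2 * σ ^ 2)) ≤
        Real.exp ((2 * σ ^ 2)⁻¹) * Real.exp (-(4 * σ ^ 2)⁻¹ * (x - μ) ^ 2) := by
      rw [← Real.exp_add]
      apply Real.exp_le_exp.2
      have hsq : (x - μ) ^ 2 ≤ 2 * (x - m) ^ 2 + 2 := by
        nlinarith [sq_nonneg ((x - m) - (m - μ)), sq_nonneg (m - μ), abs_nonneg (m - μ),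
          sq_abs (m - μ), hmm]
      have e1 : -(x - m) ^ 2 / (2 * σ ^ 2) = (-2 * (x - m) ^ 2) / (4 * σ ^ 2) := by ring
      have e2 : (2 * σ ^ 2)⁻¹ + -(4 * σ ^ 2)⁻¹ * (x - μ) ^ 2
          = (2 - (x - μ) ^ 2) / (4 * σ ^ 2) := by
        field_simp
        ring
      rw [e1, e2]
      gcongr
      linarith
    calc Real.exp (N * f x) * (|x - m| / σ ^ 2 * Real.exp (-(x - m) ^ 2 / (2 * σ ^ 2)))
        ≤ Real.exp B * ((|x - μ| + 1) / σ ^ 2 *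
            (Real.exp ((2 * σ ^ 2)⁻¹) * Real.exp (-(4 * σ ^ 2)⁻¹ * (x - μ) ^ 2))) := by
          apply mul_le_mul h1 _ (by positivity) (Real.exp_pos _).le
          apply mul_le_mul ?hh h3 (Real.exp_pos _).le (by positivity)
          case hh => gcongr
      _ = bound x := by rw [hbound]; ring
  · refine Eventually.of_forall fun x => fun m _ => ?_
    have hp : HasDerivAt (fun m' : ℝ => x - m') (-1) m := by
      simpa using (hasDerivAt_id m).const_sub x
    have hq : HasDerivAt (fun m' : ℝ => -(x - m') ^ 2 / (2 * σ ^ 2))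
        ((x - m) / σ ^ 2) m := by
      have := ((hp.pow 2).neg).div_const (2 * σ ^ 2)
      refine this.congr_deriv (Eq.symm ?_)
      field_simp
      ring
    have he := hq.exp
    have := he.const_mul (Real.exp (N * f x))
    refine this.congr_deriv (Eq.symm ?_)
    rw [hF']
    ring

set_option maxHeartbeats 1600000 in
/-- One-dimensional version of the stationary-point localization theorem: for large `N`,
on the ball `|μ| ≤ M`, the derivative of `F_{N,σ}` is negative to the right of `x* + δ`
and positive to the left of `x* - δ`. -/
theorem stmt17 (f : ℝ → ℝ) (hf : Continuous f)
    (hlim : Tendsto f (comap (fun x => |x|) atTop) atBot)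
    (xstar : ℝ) (hmax : ∀ x, x ≠ xstar → f x < f xstar)
    (σ δ M : ℝ) (hσ : 0 < σ) (hδ : 0 < δ) (hM : δ < M)
    (F : ℝ → ℝ → ℝ)
    (hF : F = fun N μ =>
      (2 * Real.pi * σ ^ 2) ^ (-(1 : ℝ) / 2) *
        ∫ x : ℝ, Real.exp (N * f x) * Real.exp (-(x - μ) ^ 2 / (2 * σ ^ 2))) :
    ∃ N₀ > (0 : ℝ), ∀ N > N₀, ∀ μ : ℝ, |μ| ≤ M →
      (μ > xstar + δ → deriv (F N) μ < 0) ∧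
      (μ < xstar - δ → deriv (F N) μ > 0) := by
  have hub : ∀ x, f x ≤ f xstar := by
    intro x
    rcases eq_or_ne x xstar with h | h
    · rw [h]
    · exact (hmax x h).le
  -- a strict upper bound away from the maximizer
  obtain ⟨s, hs, hout⟩ : ∃ s, s < f xstar ∧ ∀ x, δ ≤ |x - xstar| → f x ≤ s := by
    have h1 : ∀ᶠ x in comap (fun x : ℝ => |x|) atTop, f x ≤ f xstar - 1 :=
      hlim.eventually (eventually_le_atBot (f xstar - 1))
    rw [eventually_comap] at h1
    obtain ⟨R₀, hR₀⟩ := eventually_atTop.1 h1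
    set R1 := max R₀ (|xstar| + δ) with hR1
    set Kset := Icc (-R1) R1 ∩ {x : ℝ | δ ≤ |x - xstar|} with hKset
    have hKc : IsCompact Kset :=
      isCompact_Icc.inter_right
        (isClosed_le continuous_const (continuous_id.sub continuous_const).abs)
    have hKne : Kset.Nonempty := by
      refine ⟨xstar + δ, ⟨⟨?_, ?_⟩, by simp [abs_of_nonneg hδ.le]⟩⟩
      · have h2 : |xstar| + δ ≤ R1 := le_max_right _ _
        have := neg_abs_le xstar
        simp only [neg_le]
        linarith [le_abs_self xstar]
      · have h2 : |xstar| + δ ≤ R1 := le_max_right _ _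
        linarith [le_abs_self xstar]
    obtain ⟨z, hzK, hzmax⟩ := hKc.exists_isMaxOn hKne hf.continuousOn
    refine ⟨max (f z) (f xstar - 1), ?_, ?_⟩
    · apply max_lt
      · apply hmax
        intro hzeq
        rcases hzK with ⟨_, hz2⟩
        rw [hzeq] at hz2
        simp only [mem_setOf_eq, sub_self, abs_zero] at hz2
        linarith
      · linarith
    · intro x hx
      rcases le_or_gt |x| R1 with hxR | hxR
      · have hxK : x ∈ Kset := ⟨⟨(abs_le.1 hxR).1, (abs_le.1 hxR).2⟩, hx⟩
        exact (hzmax hxK).trans (le_max_left _ _)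
      · have : f x ≤ f xstar - 1 :=
          hR₀ |x| ((le_max_left _ _).trans hxR.le) x rfl
        exact this.trans (le_max_right _ _)
  set ε := (f xstar - s) / 2 with hε
  have hεpos : 0 < ε := by rw [hε]; linarith
  -- continuity neighborhood
  obtain ⟨η, hη, hηδ, hI⟩ : ∃ η, 0 < η ∧ η ≤ δ / 2 ∧
      ∀ x, |x - xstar| ≤ η → f xstar - ε ≤ f x := by
    obtain ⟨d, hd, hdprop⟩ := Metric.continuous_iff.1 hf xstar ε hεpos
    refine ⟨min (d / 2) (δ / 2), by positivity, min_le_right _ _, ?_⟩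
    intro x hx
    have hxd : dist x xstar < d := by
      rw [Real.dist_eq]
      calc |x - xstar| ≤ min (d / 2) (δ / 2) := hx
        _ ≤ d / 2 := min_le_left _ _
        _ < d := by linarith
    have := hdprop x hxd
    rw [Real.dist_eq] at this
    have := abs_lt.1 this
    linarith [this.1, this.2]
  set R : ℝ := M + |xstar| + δ with hR
  set c := Real.exp (-R ^ 2 / (2 * σ ^ 2)) with hc
  have hcpos : 0 < c := Real.exp_pos _
  set K := ∫ t : ℝ, |t| * Real.exp (-t ^ 2 / (2 * σ ^ 2)) with hK
  have hKnn : 0 ≤ K := integral_nonneg fun t => by positivity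
  set D := δ / 2 * (2 * η) * c with hD
  have hDpos : 0 < D := by rw [hD]; positivity
  refine ⟨max 1 (Real.log ((K + 1) / D) / ε + 1), lt_of_lt_of_le one_pos (le_max_left _ _), ?_⟩
  intro N hN μ hμM
  have hNpos : 0 < N := lt_of_lt_of_le one_pos ((le_max_left _ _).trans hN.le)
  have hNcond : K * Real.exp (N * s) < D * Real.exp (N * (f xstar - ε)) := by
    have h1 : Real.log ((K + 1) / D) / ε + 1 < N :=
      lt_of_le_of_lt (le_max_right _ _) hN
    have h2 : Real.log ((K + 1) / D) < N * ε := by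
      have : Real.log ((K + 1) / D) / ε < N := by linarith
      calc Real.log ((K + 1) / D) = Real.log ((K + 1) / D) / ε * ε := by
            field_simp
        _ < N * ε := by
            exact mul_lt_mul_of_pos_right this hεpos
    have h3 : (K + 1) / D < Real.exp (N * ε) := by
      calc (K + 1) / D = Real.exp (Real.log ((K + 1) / D)) :=
            (Real.exp_log (by positivity)).symm
        _ < Real.exp (N * ε) := Real.exp_lt_exp.2 h2
    have h4 : K + 1 < D * Real.exp (N * ε) := by
      rw [div_lt_iff₀ hDpos] at h3
      linarith [h3]
    have h5 : Real.exp (N * (f xstar - ε)) = Real.exp (N * ε) * Real.exp (N * s) := by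
      rw [← Real.exp_add]
      congr 1
      rw [hε]; ring
    calc K * Real.exp (N * s) < D * Real.exp (N * ε) * Real.exp (N * s) := by
          apply mul_lt_mul_of_pos_right _ (Real.exp_pos _)
          linarith
      _ = D * Real.exp (N * (f xstar - ε)) := by rw [h5]; ring
  have hub' : ∀ x, N * f x ≤ N * f xstar := fun x =>
    mul_le_mul_of_nonneg_left (hub x) hNpos.le
  subst hF
  have hC : (0:ℝ) < (2 * Real.pi * σ ^ 2) ^ (-(1:ℝ) / 2) :=
    Real.rpow_pos_of_pos (by positivity) _
  have hσ2 : (0:ℝ) < (σ ^ 2)⁻¹ := by positivity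
  have hder := deriv_int f hf σ N (N * f xstar) μ hσ hub'
  have hderF := hder.const_mul ((2 * Real.pi * σ ^ 2) ^ (-(1:ℝ) / 2))
  have hdeq : deriv ((fun N μ => (2 * Real.pi * σ ^ 2) ^ (-(1 : ℝ) / 2) *
        ∫ x : ℝ, Real.exp (N * f x) * Real.exp (-(x - μ) ^ 2 / (2 * σ ^ 2))) N) μ
      = (2 * Real.pi * σ ^ 2) ^ (-(1:ℝ) / 2) * ((σ ^ 2)⁻¹ *
        ∫ x : ℝ, (x - μ) * (Real.exp (N * f x) * Real.exp (-(x - μ) ^ 2 / (2 * σ ^ 2)))) :=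
    hderF.deriv
  constructor
  · intro hμr
    have hcle : ∀ x ∈ Icc (xstar - η) (xstar + η),
        c ≤ Real.exp (-(x - μ) ^ 2 / (2 * σ ^ 2)) := by
      intro x hx
      rcases hx with ⟨hx1, hx2⟩
      have habs : |x - μ| ≤ R := by
        have h1 : |x| ≤ |xstar| + η := by
          have : |x - xstar| ≤ η := abs_le.2 ⟨by linarith, by linarith⟩
          calc |x| = |xstar + (x - xstar)| := by ring_nf
            _ ≤ |xstar| + |x - xstar| := abs_add_le _ _
            _ ≤ |xstar| + η := by linarith
        calc |x - μ| ≤ |x| + |μ| := abs_sub _ _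
          _ ≤ (|xstar| + η) + M := by linarith
          _ ≤ R := by rw [hR]; linarith
      rw [hc]
      apply Real.exp_le_exp.2
      have hsq : (x - μ) ^ 2 ≤ R ^ 2 := by
        have h0 : (0:ℝ) ≤ R := (abs_nonneg _).trans habs
        nlinarith [abs_nonneg (x - μ), sq_abs (x - μ)]
      gcongr
    have hneg := core_neg f hf σ δ η N s ε c K xstar μ hσ hδ hη hηδ hNpos.le hub hout hI
      hcpos hcle hK (by linarith) (by rw [hD] at hNcond; exact hNcond)
    rw [hdeq]
    exact mul_neg_of_pos_of_neg hC (mul_neg_of_pos_of_neg hσ2 hneg)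
  · intro hμl
    have hcle : ∀ x ∈ Icc (-xstar - η) (-xstar + η),
        c ≤ Real.exp (-(x - -μ) ^ 2 / (2 * σ ^ 2)) := by
      intro x hx
      rcases hx with ⟨hx1, hx2⟩
      have habs : |x - -μ| ≤ R := by
        have h1 : |x| ≤ |xstar| + η := by
          have h2 : |x - -xstar| ≤ η := abs_le.2 ⟨by linarith, by linarith⟩
          calc |x| = |(-xstar) + (x - -xstar)| := by ring_nf
            _ ≤ |(-xstar)| + |x - -xstar| := abs_add_le _ _
            _ ≤ |xstar| + η := by rw [abs_neg]; linarith
        have h3 : |(-μ)| ≤ M := by rw [abs_neg]; exact hμM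
        calc |x - -μ| ≤ |x| + |(-μ)| := abs_sub _ _
          _ ≤ (|xstar| + η) + M := by linarith
          _ ≤ R := by rw [hR]; linarith
      rw [hc]
      apply Real.exp_le_exp.2
      have hsq : (x - -μ) ^ 2 ≤ R ^ 2 := by
        have h0 : (0:ℝ) ≤ R := (abs_nonneg _).trans habs
        nlinarith [abs_nonneg (x - -μ), sq_abs (x - -μ)]
      gcongr
    have hneg := core_neg (fun x => f (-x)) (hf.comp continuous_neg) σ δ η N s ε c K
      (-xstar) (-μ) hσ hδ hη hηδ hNpos.le
      (by intro x; simp only [neg_neg]; exact hub (-x))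
      (by
        intro x hx
        apply hout
        rwa [show x - -xstar = -(-x - xstar) by ring, abs_neg] at hx)
      (by
        intro x hx
        simp only [neg_neg]
        apply hI
        rwa [show x - -xstar = -(-x - xstar) by ring, abs_neg] at hx)
      hcpos hcle hK (by linarith)
      (by
        simp only [neg_neg]
        rw [hD] at hNcond; exact hNcond)
    -- reflect the integral
    have hrefl : (∫ x : ℝ, (x - -μ) *
          (Real.exp (N * f (-x)) * Real.exp (-(x - -μ) ^ 2 / (2 * σ ^ 2))))
        = -∫ x : ℝ, (x - μ) * (Real.exp (N * f x) * Real.exp (-(x - μ) ^ 2 / (2 * σ ^ 2))) := by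
      rw [← integral_neg_eq_self (fun x : ℝ => (x - -μ) *
          (Real.exp (N * f (-x)) * Real.exp (-(x - -μ) ^ 2 / (2 * σ ^ 2)))) volume]
      rw [← integral_neg]
      congr 1
      ext x
      have e1 : Real.exp (-(-x - -μ) ^ 2 / (2 * σ ^ 2))
          = Real.exp (-(x - μ) ^ 2 / (2 * σ ^ 2)) := by
        congr 1
        ring
      simp only [neg_neg, e1]
      ring
    rw [hrefl] at hneg
    have hpos : (0:ℝ) <
        ∫ x : ℝ, (x - μ) * (Real.exp (N * f x) * Real.exp (-(x - μ) ^ 2 / (2 * σ ^ 2))) := by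
      linarith
    rw [hdeq]
    exact mul_pos hC (mul_pos hσ2 hpos)
end

section
/- Let f : ℝ^d → ℝ be continuous, bounded above with supremum f* attained at x*, and Lipschitz with constant L_f. Fix N > 0 and a schedule σ_t = σ_0 β^t + b with β ∈ (0,1), b, σ_0 > 0. Define F_σ(μ) = E_{ε ~ N(0,I_d)}[e^{N f(μ + σε)}]. Then for every μ ∈ ℝ^d and t ≥ 0, F_{σ_{t+1}}(μ) ≥ F_{σ_t}(μ) - σ_0 C (1-β) β^t, where C = √2 (Γ((d+1)/2)/Γ(d/2)) N e^{N f*} L_f. -/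
open MeasureTheory Real Filter

lemma exp_sub_exp_le_of_le {M a b : ℝ} (ha : a ≤ M) (hb : b ≤ M) :
    Real.exp a - Real.exp b ≤ Real.exp M * |a - b| := by
  rcases le_total b a with h | h
  · rw [abs_of_nonneg (by linarith)]
    have h1 := Real.add_one_le_exp (b - a)
    have h2 : exp b = exp (b - a) * exp a := by rw [← Real.exp_add]; ring_nf
    have h3 : exp a ≤ exp M := Real.exp_le_exp.mpr ha
    nlinarith [Real.exp_pos a, Real.exp_pos M]
  · have h1 : exp a ≤ exp b := Real.exp_le_exp.mpr h
    have h2 := abs_nonneg (a - b)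
    nlinarith [Real.exp_pos M]

lemma integrable_exp_neg_mul_sq_norm_euclidean (d : ℕ) {a : ℝ} (ha : 0 < a) :
    Integrable (fun x : EuclideanSpace ℝ (Fin d) => Real.exp (-a * ‖x‖ ^ 2)) := by
  have h := (GaussianFourier.integrable_cexp_neg_mul_sq_norm_add
    (V := EuclideanSpace ℝ (Fin d)) (b := (a : ℂ)) (by simpa using ha) 0 0).norm
  refine h.congr ?_
  filter_upwards with x
  rw [Complex.norm_exp]
  have : (-(a:ℂ) * (‖x‖:ℂ) ^ 2 + 0 * (inner ℝ 0 x : ℝ)) = ((-a * ‖x‖ ^ 2 : ℝ) : ℂ) := by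
    push_cast; ring
  rw [this, Complex.ofReal_re]


lemma gaussian_abs_moment (d : ℕ) (hd : 0 < d) :
    ∫ x : EuclideanSpace ℝ (Fin d),
        (2 * Real.pi) ^ (-(d : ℝ) / 2) * Real.exp (-‖x‖ ^ 2 / 2) * ‖x‖
      = Real.sqrt 2 * (Real.Gamma (((d : ℝ) + 1) / 2) / Real.Gamma ((d : ℝ) / 2)) := by
  set c : ℝ := (2 * Real.pi) ^ (-(d : ℝ) / 2) with hc
  have hne : Nonempty (Fin d) := ⟨⟨0, hd⟩⟩
  have hnt : Nontrivial (EuclideanSpace ℝ (Fin d)) := by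
    refine ⟨EuclideanSpace.single ⟨0, hd⟩ (1:ℝ), 0, ?_⟩
    intro h
    have := congrArg (fun v : EuclideanSpace ℝ (Fin d) => v ⟨0, hd⟩) h
    simp at this
  have key := integral_fun_norm_addHaar (volume : Measure (EuclideanSpace ℝ (Fin d)))
    (fun r : ℝ => c * Real.exp (-r ^ 2 / 2) * r)
  have hdim : Module.finrank ℝ (EuclideanSpace ℝ (Fin d)) = d := finrank_euclideanSpace_fin
  rw [hdim] at key
  rw [key]
  have hball := EuclideanSpace.volume_ball (Fin d) 0 1
  rw [measureReal_def, hball]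
  have hΓpos : 0 < Real.Gamma ((d:ℝ)/2 + 1) := Real.Gamma_pos_of_pos (by positivity)
  have htr : ((ENNReal.ofReal (1:ℝ)) ^ (Fintype.card (Fin d)) *
      ENNReal.ofReal (Real.sqrt Real.pi ^ (Fintype.card (Fin d))
        / Real.Gamma ((Fintype.card (Fin d) : ℝ) / 2 + 1))).toReal
      = Real.sqrt Real.pi ^ d / Real.Gamma ((d:ℝ)/2 + 1) := by
    simp [Fintype.card_fin, ENNReal.toReal_mul, ENNReal.toReal_pow,
      ENNReal.toReal_ofReal
        (by positivity : (0:ℝ) ≤ Real.sqrt Real.pi ^ d / Real.Gamma ((d:ℝ)/2 + 1))]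
  rw [htr]
  have hrad : ∫ y in Set.Ioi (0:ℝ), y ^ (d - 1) • (c * Real.exp (-y ^ 2 / 2) * y)
      = c * ((1/2 : ℝ) ^ (-((d:ℝ) + 1) / 2) * (1 / 2) * Real.Gamma (((d:ℝ) + 1) / 2)) := by
    have h1 : ∫ y in Set.Ioi (0:ℝ), y ^ (d - 1) • (c * Real.exp (-y ^ 2 / 2) * y)
        = c * ∫ y in Set.Ioi (0:ℝ), y ^ ((d : ℝ)) * Real.exp (-(1/2) * y ^ ((2:ℝ))) := by
      rw [← integral_const_mul]
      refine setIntegral_congr_fun measurableSet_Ioi fun y hy => ?_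
      rw [smul_eq_mul, Real.rpow_natCast, Real.rpow_two]
      have hyp : y ^ (d-1) * y = y ^ d := by rw [← pow_succ, Nat.sub_add_cancel hd]
      rw [← hyp]
      ring_nf
    rw [h1, integral_rpow_mul_exp_neg_mul_rpow (by norm_num)
      (lt_of_lt_of_le (by norm_num) (Nat.cast_nonneg d)) (by norm_num)]
  rw [hrad]
  simp only [nsmul_eq_mul, smul_eq_mul]
  rw [show (d:ℝ) * (Real.sqrt Real.pi ^ d / Real.Gamma ((d:ℝ)/2 + 1) *
      (c * ((1/2 : ℝ) ^ (-((d:ℝ) + 1) / 2) * (1 / 2) * Real.Gamma (((d:ℝ) + 1) / 2))))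
      = (d:ℝ) * (Real.sqrt Real.pi ^ d / Real.Gamma ((d:ℝ)/2 + 1)) *
      (c * ((1/2 : ℝ) ^ (-((d:ℝ) + 1) / 2) * (1 / 2) * Real.Gamma (((d:ℝ) + 1) / 2))) by ring]
  have hd0 : (0:ℝ) < d := Nat.cast_pos.mpr hd
  have hΓ1 : 0 < Real.Gamma ((d:ℝ)/2) := Real.Gamma_pos_of_pos (by positivity)
  have e1 : Real.sqrt Real.pi ^ d = Real.pi ^ ((d:ℝ)/2) := by
    rw [Real.sqrt_eq_rpow, ← Real.rpow_natCast (Real.pi ^ (1/2 : ℝ)) d,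
      ← Real.rpow_mul Real.pi_pos.le]
    congr 1; ring
  have e2 : ((2 * Real.pi) : ℝ) ^ (-(d : ℝ) / 2)
      = 2 ^ (-(d:ℝ)/2) * Real.pi ^ (-(d:ℝ)/2) :=
    Real.mul_rpow (by norm_num) Real.pi_pos.le
  have e3 : (1/2:ℝ) ^ (-((d:ℝ)+1)/2) = 2 ^ (((d:ℝ)+1)/2) := by
    rw [one_div, Real.inv_rpow (by norm_num : (0:ℝ) ≤ 2),
      ← Real.rpow_neg (by norm_num : (0:ℝ) ≤ 2)]
    congr 1; ring
  have e4 : Real.Gamma ((d:ℝ)/2 + 1) = ((d:ℝ)/2) * Real.Gamma ((d:ℝ)/2) :=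
    Real.Gamma_add_one (by positivity)
  have hprod : (Real.pi ^ ((d:ℝ)/2) * Real.pi ^ (-(d:ℝ)/2)) *
      (2 ^ (-(d:ℝ)/2) * 2 ^ (((d:ℝ)+1)/2)) = Real.sqrt 2 := by
    rw [← Real.rpow_add Real.pi_pos, ← Real.rpow_add (by norm_num : (0:ℝ) < 2)]
    rw [Real.sqrt_eq_rpow]
    rw [show ((d:ℝ)/2 + -(d:ℝ)/2) = 0 by ring, Real.rpow_zero, one_mul,
      show (-(d:ℝ)/2 + ((d:ℝ)+1)/2) = 1/2 by ring]
  rw [hc, e1, e2, e3, e4]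
  field_simp
  rw [neg_div] at hprod
  linear_combination hprod

/-- Drift bound along the schedule: for `f` continuous, `L_f`-Lipschitz, with supremum `f*`
attained at `x*`, and `F_σ(μ) = E_{ε ~ N(0,I_d)}[e^{N f(μ + σε)}]`,
`F_{σ_{t+1}}(μ) ≥ F_{σ_t}(μ) - σ₀ C (1-β) β^t` where
`C = √2 (Γ((d+1)/2)/Γ(d/2)) N e^{N f*} L_f` and `σ_t = σ₀ β^t + b`. -/
theorem stmt19 (d : ℕ) (f : EuclideanSpace ℝ (Fin d) → ℝ) (Lf fstar : ℝ)
    (hf : Continuous f)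
    (hLip : ∀ x y, |f x - f y| ≤ Lf * ‖x - y‖)
    (xstar : EuclideanSpace ℝ (Fin d)) (hfs : f xstar = fstar)
    (hub : ∀ x, f x ≤ fstar)
    (N σ0 b β : ℝ) (hN : 0 < N) (hσ0 : 0 < σ0) (hb : 0 < b)
    (hβ : β ∈ Set.Ioo (0 : ℝ) 1)
    (σ : ℕ → ℝ) (hσ : σ = fun t => σ0 * β ^ t + b)
    (γ : Measure (EuclideanSpace ℝ (Fin d)))
    (hγ : γ = MeasureTheory.volume.withDensity
      (fun ε => ENNReal.ofReal
        ((2 * Real.pi) ^ (-(d : ℝ) / 2) * Real.exp (-‖ε‖ ^ 2 / 2))))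
    (F : ℝ → EuclideanSpace ℝ (Fin d) → ℝ)
    (hF : F = fun s μ => ∫ ε, Real.exp (N * f (μ + s • ε)) ∂γ)
    (C : ℝ)
    (hC : C = Real.sqrt 2 * (Real.Gamma (((d : ℝ) + 1) / 2) / Real.Gamma ((d : ℝ) / 2)) *
      N * Real.exp (N * fstar) * Lf)
    (μ : EuclideanSpace ℝ (Fin d)) (t : ℕ) :
    F (σ (t + 1)) μ ≥ F (σ t) μ - σ0 * C * (1 - β) * β ^ t := by
  obtain ⟨hβ0, hβ1⟩ := hβ
  -- trivial case d = 0
  rcases Nat.eq_zero_or_pos d with hd0 | hd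
  · subst hd0
    have hC0 : C = 0 := by
      norm_num [hC, Real.Gamma_zero]
    have hFF : F (σ (t+1)) μ = F (σ t) μ := by
      rw [hF]
      refine integral_congr_ae (ae_of_all _ fun ε => ?_)
      have : ε = 0 := Subsingleton.elim ε 0
      simp [this]
    rw [hFF, hC0]
    simp
  -- main case
  have hne : Nonempty (Fin d) := ⟨⟨0, hd⟩⟩
  set c : ℝ := (2 * Real.pi) ^ (-(d : ℝ) / 2) with hc
  have hcpos : 0 < c := Real.rpow_pos_of_pos (by positivity) _
  set ρ : EuclideanSpace ℝ (Fin d) → ℝ := fun x => c * Real.exp (-‖x‖ ^ 2 / 2) with hρ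
  have hρpos : ∀ x, 0 < ρ x := fun x => mul_pos hcpos (Real.exp_pos _)
  have hρcont : Continuous ρ := by
    apply continuous_const.mul
    exact (((continuous_norm.pow 2).neg.div_const 2)).rexp
  -- rewrite γ as withDensity of an ℝ≥0 function
  have hγ' : γ = MeasureTheory.volume.withDensity (fun x => ((ρ x).toNNReal : ENNReal)) := by
    rw [hγ]; rfl
  have hρmeas : Measurable fun x : EuclideanSpace ℝ (Fin d) => (ρ x).toNNReal :=
    (hρcont.measurable).real_toNNReal
  -- conversion of integrals
  have hconv : ∀ g : EuclideanSpace ℝ (Fin d) → ℝ, ∫ x, g x ∂γ = ∫ x, ρ x * g x := by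
    intro g
    rw [hγ', integral_withDensity_eq_integral_smul hρmeas]
    refine integral_congr_ae (ae_of_all _ fun x => ?_)
    simp [NNReal.smul_def, Real.coe_toNNReal _ (hρpos x).le]
  have hconvInt : ∀ g : EuclideanSpace ℝ (Fin d) → ℝ, Integrable g γ ↔ Integrable (fun x => ρ x * g x) := by
    intro g
    rw [hγ', integrable_withDensity_iff_integrable_smul hρmeas]
    constructor <;> intro h <;> refine h.congr (ae_of_all _ fun x => ?_) <;>
      simp [NNReal.smul_def, Real.coe_toNNReal _ (hρpos x).le]
  -- Gaussian integrability facts over volume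
  have hgauss : ∀ a : ℝ, 0 < a → Integrable (fun x : EuclideanSpace ℝ (Fin d) => Real.exp (-a * ‖x‖ ^ 2)) :=
    fun a ha => integrable_exp_neg_mul_sq_norm_euclidean d ha
  have hρint : Integrable ρ := by
    have := (hgauss (1/2) (by norm_num)).const_mul c
    refine this.congr (ae_of_all _ fun x => ?_)
    rw [hρ]; ring_nf
  -- γ is a finite measure
  have hγfin : IsFiniteMeasure γ := by
    constructor
    rw [hγ', withDensity_apply _ MeasurableSet.univ, setLIntegral_univ]
    have heq : ∀ x : EuclideanSpace ℝ (Fin d), ((ρ x).toNNReal : ENNReal) = ENNReal.ofReal (ρ x) :=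
      fun x => rfl
    simp_rw [heq]
    rw [← ofReal_integral_eq_lintegral_ofReal hρint (ae_of_all _ fun x => (hρpos x).le)]
    exact ENNReal.ofReal_lt_top
  -- ‖·‖ is γ-integrable
  have hnormint : Integrable (fun x : EuclideanSpace ℝ (Fin d) => ‖x‖) γ := by
    rw [hconvInt]
    have hbig : Integrable (fun x : EuclideanSpace ℝ (Fin d) => 2 * c * Real.exp (-(1/4) * ‖x‖ ^ 2)) :=
      (hgauss (1/4) (by norm_num)).const_mul _
    refine hbig.mono' ((hρcont.mul continuous_norm).aestronglyMeasurable) ?_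
    filter_upwards with x
    have hr : (0:ℝ) ≤ ‖x‖ := norm_nonneg x
    have key : ‖x‖ ≤ 2 * Real.exp (‖x‖ ^ 2 / 4) := by
      nlinarith [Real.add_one_le_exp (‖x‖ ^ 2 / 4), sq_nonneg (‖x‖ - 1)]
    rw [Real.norm_eq_abs, abs_of_nonneg (by positivity : (0:ℝ) ≤ ρ x * ‖x‖)]
    have hexp : Real.exp (-‖x‖ ^ 2 / 2) * Real.exp (‖x‖ ^ 2 / 4)
        = Real.exp (-(1/4) * ‖x‖ ^ 2) := by
      rw [← Real.exp_add]; ring_nf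
    calc ρ x * ‖x‖ ≤ ρ x * (2 * Real.exp (‖x‖ ^ 2 / 4)) := by
          exact mul_le_mul_of_nonneg_left key (hρpos x).le
      _ = 2 * c * Real.exp (-(1/4) * ‖x‖ ^ 2) := by
          rw [hρ]; rw [← hexp]; ring
  -- value of the first absolute moment
  have hM : ∫ x, ‖x‖ ∂γ
      = Real.sqrt 2 * (Real.Gamma (((d : ℝ) + 1) / 2) / Real.Gamma ((d : ℝ) / 2)) := by
    rw [hconv]
    simp only [hρ, hc]
    exact gaussian_abs_moment d hd
  -- Lf nonneg
  have hLf : 0 ≤ Lf := by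
    have h := hLip (EuclideanSpace.single ⟨0, hd⟩ (1:ℝ)) 0
    have hn : ‖EuclideanSpace.single (⟨0, hd⟩ : Fin d) (1:ℝ) - 0‖ = 1 := by
      simp [EuclideanSpace.norm_single]
    rw [hn, mul_one] at h
    exact le_trans (abs_nonneg _) h
  -- integrability of the integrands
  have hgint : ∀ s : ℝ, Integrable (fun ε : EuclideanSpace ℝ (Fin d) => Real.exp (N * f (μ + s • ε))) γ := by
    intro s
    have hcont : Continuous fun ε : EuclideanSpace ℝ (Fin d) => Real.exp (N * f (μ + s • ε)) := by
      fun_prop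
    refine (integrable_const (Real.exp (N * fstar))).mono' hcont.aestronglyMeasurable ?_
    filter_upwards with ε
    rw [Real.norm_eq_abs, abs_of_pos (Real.exp_pos _)]
    exact Real.exp_le_exp.mpr (mul_le_mul_of_nonneg_left (hub _) hN.le)
  -- key difference bound
  have hdiff : ∀ s1 s2 : ℝ, F s1 μ - F s2 μ
      ≤ Real.exp (N * fstar) * N * Lf * |s1 - s2| * ∫ x, ‖x‖ ∂γ := by
    intro s1 s2
    rw [hF]
    simp only
    rw [← integral_sub (hgint s1) (hgint s2)]
    have hbd : ‖∫ ε, (Real.exp (N * f (μ + s1 • ε)) - Real.exp (N * f (μ + s2 • ε))) ∂γ‖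
        ≤ ∫ ε, Real.exp (N * fstar) * N * Lf * |s1 - s2| * ‖ε‖ ∂γ := by
      refine norm_integral_le_of_norm_le ((hnormint.const_mul _)) ?_
      filter_upwards with ε
      rw [Real.norm_eq_abs]
      have h1 : N * f (μ + s1 • ε) ≤ N * fstar :=
        mul_le_mul_of_nonneg_left (hub _) hN.le
      have h2 : N * f (μ + s2 • ε) ≤ N * fstar :=
        mul_le_mul_of_nonneg_left (hub _) hN.le
      have habs : |Real.exp (N * f (μ + s1 • ε)) - Real.exp (N * f (μ + s2 • ε))|
          ≤ Real.exp (N * fstar) * |N * f (μ + s1 • ε) - N * f (μ + s2 • ε)| := by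
        rcases le_total (Real.exp (N * f (μ + s2 • ε))) (Real.exp (N * f (μ + s1 • ε))) with h | h
        · rw [abs_of_nonneg (by linarith)]
          exact exp_sub_exp_le_of_le h1 h2
        · rw [abs_of_nonpos (by linarith), neg_sub, ← abs_sub_comm]
          exact exp_sub_exp_le_of_le h2 h1
      have hfl : |N * f (μ + s1 • ε) - N * f (μ + s2 • ε)| ≤ N * (Lf * (|s1 - s2| * ‖ε‖)) := by
        rw [← mul_sub, abs_mul, abs_of_pos hN]
        refine mul_le_mul_of_nonneg_left ?_ hN.le
        have := hLip (μ + s1 • ε) (μ + s2 • ε)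
        have hveq : (μ + s1 • ε) - (μ + s2 • ε) = (s1 - s2) • ε := by
          rw [sub_smul]; abel
        rw [hveq, norm_smul, Real.norm_eq_abs] at this
        exact this
      calc |Real.exp (N * f (μ + s1 • ε)) - Real.exp (N * f (μ + s2 • ε))|
          ≤ Real.exp (N * fstar) * (N * (Lf * (|s1 - s2| * ‖ε‖))) :=
            le_trans habs (mul_le_mul_of_nonneg_left hfl (Real.exp_pos _).le)
        _ = Real.exp (N * fstar) * N * Lf * |s1 - s2| * ‖ε‖ := by ring
    rw [integral_const_mul] at hbd
    calc (∫ ε, (Real.exp (N * f (μ + s1 • ε)) - Real.exp (N * f (μ + s2 • ε))) ∂γ)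
        ≤ ‖∫ ε, (Real.exp (N * f (μ + s1 • ε)) - Real.exp (N * f (μ + s2 • ε))) ∂γ‖ :=
          le_abs_self _
      _ ≤ _ := hbd
  -- conclude
  have hβt : (0:ℝ) < β ^ t := pow_pos hβ0 t
  have hsd : σ t - σ (t + 1) = σ0 * (1 - β) * β ^ t := by
    rw [hσ]; simp only; ring
  have habs : |σ t - σ (t + 1)| = σ0 * (1 - β) * β ^ t := by
    rw [hsd, abs_of_nonneg (mul_nonneg (mul_nonneg hσ0.le (by linarith)) hβt.le)]
  have h := hdiff (σ t) (σ (t + 1))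
  rw [habs, hM] at h
  rw [hC]
  rw [ge_iff_le]
  nlinarith [h]
end
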